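/- Let X be a real-valued random variable with a normal distribution N(μ, σ²), and let I ⊆ ℝ be any Lebesgue-measurable set. Then P(X ∈ I) ≤ 2Φ(λ(I)/(2σ)) − 1, where Φ is the standard normal CDF and λ(I) is the Lebesgue measure of I. -/

import Mathlib

open MeasureTheory Real Set ProbabilityTheory

noncomputable def stdPhi (x : ℝ) : ℝ := (Real.sqrt (2 * Real.pi))⁻¹ * Real.exp (-x ^ 2 / 2)

lemma stdPhi_eq_gauss : stdPhi = gaussianPDFReal 0 1 := by
  ext x; simp [stdPhi, gaussianPDFReal]

lemma stdPhi_integrable : Integrable stdPhi := by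
  rw [stdPhi_eq_gauss]; exact integrable_gaussianPDFReal 0 1

lemma stdPhi_integral : ∫ x, stdPhi x = 1 := by
  rw [stdPhi_eq_gauss]; exact integral_gaussianPDFReal_eq_one 0 one_ne_zero

lemma stdPhi_neg (x : ℝ) : stdPhi (-x) = stdPhi x := by simp [stdPhi]

lemma stdPhi_add (t : ℝ) :
    (∫ x in Iic t, stdPhi x) + (∫ x in Iic (-t), stdPhi x) = 1 := by
  have h1 : (∫ x in Iic (-t), stdPhi x) = ∫ x in Ioi t, stdPhi x := by
    rw [show (∫ x in Iic (-t), stdPhi x) = ∫ x in Iic (-t), stdPhi (-x) by simp_rw [stdPhi_neg],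
      integral_comp_neg_Iic, neg_neg]
  rw [h1, intervalIntegral.integral_Iic_add_Ioi
    stdPhi_integrable.integrableOn stdPhi_integrable.integrableOn, stdPhi_integral]

lemma stdPhi_Icc {t : ℝ} (ht : 0 ≤ t) :
    (∫ x in Icc (-t) t, stdPhi x) = (∫ x in Iic t, stdPhi x) - (∫ x in Iic (-t), stdPhi x) := by
  rw [integral_Icc_eq_integral_Ioc,
    intervalIntegral.integral_Iic_sub_Iic stdPhi_integrable.integrableOn
      stdPhi_integrable.integrableOn,
    intervalIntegral.integral_of_le (by linarith)]

lemma gauss_pdf_eq (μ σ : ℝ) (hσ : 0 < σ) (x : ℝ) :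
    gaussianPDFReal μ (σ ^ 2).toNNReal x = σ⁻¹ * stdPhi ((x - μ) / σ) := by
  have hv : (((σ ^ 2).toNNReal) : ℝ) = σ ^ 2 := Real.coe_toNNReal _ (sq_nonneg σ)
  rw [gaussianPDFReal, stdPhi, hv]
  have h1 : Real.sqrt (2 * π * σ ^ 2) = Real.sqrt (2 * π) * σ := by
    rw [Real.sqrt_mul (by positivity), Real.sqrt_sq hσ.le]
  have h2 : -((x - μ) / σ) ^ 2 / 2 = -(x - μ) ^ 2 / (2 * σ ^ 2) := by
    field_simp
  rw [h1, h2, mul_inv]; ring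

lemma gauss_Icc (μ σ t : ℝ) (hσ : 0 < σ) :
    ∫ x in Icc (μ - σ * t) (μ + σ * t), gaussianPDFReal μ (σ ^ 2).toNNReal x
      = ∫ x in Icc (-t) t, stdPhi x := by
  rw [← integral_indicator measurableSet_Icc]
  have key : ∀ x, (Icc (μ - σ * t) (μ + σ * t)).indicator (gaussianPDFReal μ (σ ^ 2).toNNReal) x
      = σ⁻¹ * ((Icc (-t) t).indicator stdPhi) ((x - μ) / σ) := by
    intro x
    by_cases hx : x ∈ Icc (μ - σ * t) (μ + σ * t)
    · have hx' : (x - μ) / σ ∈ Icc (-t) t := by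
        obtain ⟨h1, h2⟩ := hx
        constructor
        · rw [le_div_iff₀ hσ]; nlinarith
        · rw [div_le_iff₀ hσ]; nlinarith
      rw [indicator_of_mem hx, indicator_of_mem hx', gauss_pdf_eq μ σ hσ]
    · have hx' : (x - μ) / σ ∉ Icc (-t) t := by
        intro h; apply hx
        obtain ⟨h1, h2⟩ := h
        rw [le_div_iff₀ hσ] at h1
        rw [div_le_iff₀ hσ] at h2
        constructor <;> nlinarith
      rw [indicator_of_notMem hx, indicator_of_notMem hx', mul_zero]
  simp_rw [key]
  rw [integral_const_mul]
  have h3 : (∫ x, ((Icc (-t) t).indicator stdPhi) ((x - μ) / σ))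
      = ∫ x, ((Icc (-t) t).indicator stdPhi) (x / σ) := by
    have := integral_sub_right_eq_self (μ := (volume : Measure ℝ))
      (fun y => ((Icc (-t) t).indicator stdPhi) (y / σ)) μ
    simpa [sub_div] using this
  rw [h3, Measure.integral_comp_div, integral_indicator measurableSet_Icc,
    abs_of_pos hσ, smul_eq_mul]
  field_simp

lemma rearrange {f : ℝ → ℝ} (hf : Integrable f) {I J : Set ℝ}
    (hI : MeasurableSet I) (hJ : MeasurableSet J)
    (hIfin : volume I ≠ ⊤) (hvol : volume I = volume J) {c : ℝ}
    (h1 : ∀ x ∈ I \ J, f x ≤ c) (h2 : ∀ x ∈ J \ I, c ≤ f x) :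
    ∫ x in I, f x ≤ ∫ x in J, f x := by
  have hInt : volume (I ∩ J) ≠ ⊤ := fun h => hIfin (eq_top_mono (measure_mono inter_subset_left) h)
  have hdiff : volume (I \ J) = volume (J \ I) :=
    measure_diff_symm hI.nullMeasurableSet hJ.nullMeasurableSet hvol hInt
  have hIJfin : volume (I \ J) ≠ ⊤ := fun h => hIfin (eq_top_mono (measure_mono diff_subset) h)
  have hJIfin : volume (J \ I) ≠ ⊤ := hdiff ▸ hIJfin
  have e1 : (∫ x in I ∩ J, f x) + ∫ x in I \ J, f x = ∫ x in I, f x :=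
    integral_inter_add_diff hJ hf.integrableOn
  have e2 : (∫ x in J ∩ I, f x) + ∫ x in J \ I, f x = ∫ x in J, f x :=
    integral_inter_add_diff hI hf.integrableOn
  rw [← e1, ← e2, inter_comm J I]
  gcongr _ + ?_
  calc ∫ x in I \ J, f x ≤ ∫ _x in I \ J, c :=
        setIntegral_mono_on hf.integrableOn
          ((integrableOn_const_iff).2 (Or.inr hIJfin.lt_top)) (hI.diff hJ) h1
    _ = (volume (I \ J)).toReal * c := by rw [setIntegral_const, smul_eq_mul, Measure.real]
    _ = (volume (J \ I)).toReal * c := by rw [hdiff]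
    _ = ∫ _x in J \ I, c := by rw [setIntegral_const, smul_eq_mul, Measure.real]
    _ ≤ ∫ x in J \ I, f x :=
        setIntegral_mono_on ((integrableOn_const_iff).2 (Or.inr hJIfin.lt_top))
          hf.integrableOn (hJ.diff hI) h2

lemma gauss_pdf_anti (μ σ : ℝ) (hσ : 0 < σ) {x y : ℝ} (h : (y - μ) ^ 2 ≤ (x - μ) ^ 2) :
    gaussianPDFReal μ (σ ^ 2).toNNReal x ≤ gaussianPDFReal μ (σ ^ 2).toNNReal y := by
  have hv : (((σ ^ 2).toNNReal) : ℝ) = σ ^ 2 := Real.coe_toNNReal _ (sq_nonneg σ)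
  unfold gaussianPDFReal
  rw [hv]
  refine mul_le_mul_of_nonneg_left ?_ (by positivity)
  refine Real.exp_le_exp.2 ?_
  exact div_le_div_of_nonneg_right (neg_le_neg h) (by positivity) |>.trans_eq rfl

/-- Gaussian anti-concentration: if `X ~ N(μ, σ²)` and `I ⊆ ℝ` is any Lebesgue-measurable set,
then `P(X ∈ I) ≤ 2Φ(λ(I)/(2σ)) − 1`, where `Φ` is the standard normal CDF and `λ` is
Lebesgue measure. -/
theorem gaussian_anti_concentration
    {Ω : Type*} [MeasureSpace Ω] [IsProbabilityMeasure (ℙ : Measure Ω)]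
    (μ σ : ℝ) (hσ : 0 < σ)
    (X : Ω → ℝ) (hX : Measure.map X ℙ = gaussianReal μ ((σ ^ 2).toNNReal))
    (I : Set ℝ) (hI : MeasurableSet I) (hIfin : volume I ≠ ⊤)
    (Φ : ℝ → ℝ)
    (hΦ : ∀ t, Φ t = ∫ x in Set.Iic t, (Real.sqrt (2 * Real.pi))⁻¹ * Real.exp (-x ^ 2 / 2)) :
    (ℙ {ω | X ω ∈ I}).toReal ≤ 2 * Φ ((volume I).toReal / (2 * σ)) - 1 := by
  have hΦ' : ∀ t, Φ t = ∫ x in Iic t, stdPhi x := fun t => by rw [hΦ t]; rfl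
  set v : NNReal := (σ ^ 2).toNNReal with hvdef
  have hv0 : v ≠ 0 := by
    simp only [hvdef, ne_eq, Real.toNNReal_eq_zero, not_le]
    positivity
  -- step 1 : P(X ∈ I) = gaussianReal applied to I
  have hXm : AEMeasurable X ℙ :=
    aemeasurable_of_map_neZero (by rw [hX]; exact ⟨IsProbabilityMeasure.ne_zero _⟩)
  have hmap : ℙ {ω | X ω ∈ I} = gaussianReal μ v I := by
    rw [show {ω | X ω ∈ I} = X ⁻¹' I from rfl, ← Measure.map_apply_of_aemeasurable hXm hI, hX]
  set L : ℝ := (volume I).toReal with hLdef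
  have hL : 0 ≤ L := ENNReal.toReal_nonneg
  set t : ℝ := L / 2 / σ with htdef
  have ht : 0 ≤ t := by positivity
  have hst : σ * t = L / 2 := by rw [htdef]; field_simp
  set J : Set ℝ := Icc (μ - σ * t) (μ + σ * t) with hJdef
  have hvol : volume I = volume J := by
    rw [hJdef, Real.volume_Icc, show μ + σ * t - (μ - σ * t) = L by rw [hst]; ring]
    exact (ENNReal.ofReal_toReal hIfin).symm
  -- step 2 : rewrite probability as integral
  have hint : (ℙ {ω | X ω ∈ I}).toReal = ∫ x in I, gaussianPDFReal μ v x := by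
    rw [hmap, gaussianReal_apply_eq_integral μ hv0, ENNReal.toReal_ofReal
      (setIntegral_nonneg hI fun x _ => gaussianPDFReal_nonneg μ v x)]
  rw [hint]
  -- step 3 : rearrangement inequality
  have step2 : ∫ x in I, gaussianPDFReal μ v x ≤ ∫ x in J, gaussianPDFReal μ v x := by
    refine rearrange (integrable_gaussianPDFReal μ v) hI measurableSet_Icc hIfin hvol
      (c := gaussianPDFReal μ v (μ + σ * t)) ?_ ?_
    · rintro x ⟨-, hxJ⟩
      refine gauss_pdf_anti μ σ hσ ?_
      rw [hJdef, mem_Icc, not_and_or, not_le, not_le] at hxJ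
      rcases hxJ with h | h <;> nlinarith
    · rintro x ⟨hxJ, -⟩
      refine gauss_pdf_anti μ σ hσ ?_
      rw [hJdef, mem_Icc] at hxJ
      nlinarith [hxJ.1, hxJ.2]
  refine step2.trans_eq ?_
  -- step 4 : compute the integral over the centered interval
  rw [hJdef, hvdef, gauss_Icc μ σ t hσ, stdPhi_Icc ht, ← hΦ' t, ← hΦ' (-t)]
  have := stdPhi_add t
  rw [← hΦ' t, ← hΦ' (-t)] at this
  have htL : t = L / (2 * σ) := by rw [htdef]; ring
  rw [← htL]
  linarith
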